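/- Let K be a compact region in ℝ³. For each x ∈ K, the evaluation map ev_x : C(K, ℍ) → ℍ, ev_x(f) = f(x), is a spin character of K; moreover the map x ↦ (restriction of ev_x to 𝓜⁺(K)) is a bijection from K onto the set of restrictions to 𝓜⁺(K) of spin characters of K. (Bijectivity part of the main theorem: the spinor spectrum is in bijection with the region.) -/

import Mathlib

set_option synthInstance.maxHeartbeats 1000000
set_option maxHeartbeats 2000000


noncomputable section

abbrev R3 : Type := EuclideanSpace ℝ (Fin 3)

abbrev Quat := Quaternion ℝ

def e (m : Fin 3) : R3 := EuclideanSpace.single m 1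

def qi : Quat := ⟨0, 1, 0, 0⟩
def qj : Quat := ⟨0, 0, 1, 0⟩
def qk : Quat := ⟨0, 0, 0, 1⟩

/-- `f` is monogenic on `U`. -/
def MonogenicOn (f : R3 → Quat) (U : Set R3) : Prop :=
  ∀ x ∈ U, DifferentiableAt ℝ f x ∧
    fderiv ℝ f x (e 0) + qk * fderiv ℝ f x (e 1) + qj * fderiv ℝ f x (e 2) = 0

open Classical in
/-- Extension of a continuous map on `K` by zero. -/
def extendK (K : Set R3) (f : C(K, Quat)) : R3 → Quat :=
  fun x => if h : x ∈ K then f ⟨x, h⟩ else 0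

/-- `f : C(K, Quat)` is monogenic on the interior of `K`. -/
def MonogenicOnInterior (K : Set R3) (f : C(K, Quat)) : Prop :=
  MonogenicOn (extendK K f) (interior K)

/-- `w` lies in the real plane `ℝ·1 + ℝ·q`. -/
def InPlane (q w : Quat) : Prop := ∃ a b : ℝ, w = a • 1 + b • q

/-- Plane-spinor fields on `K`. -/
def IsPlaneSpinor (K : Set R3) (f : C(K, Quat)) : Prop :=
  ∃ q : Quat, q ^ 2 = -1 ∧ (∀ x, InPlane q (f x)) ∧ MonogenicOnInterior K f

/-- Spin characters of `K`. -/
structure IsSpinCharacter (K : Set R3) (δ : C(K, Quat) → Quat) : Prop where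
  continuous : Continuous δ
  map_add : ∀ f g : C(K, Quat), δ (f + g) = δ f + δ g
  map_smul_right : ∀ (f : C(K, Quat)) (a : Quat), δ (f * ContinuousMap.const _ a) = δ f * a
  map_one : δ 1 = 1
  grade_real : ∀ f : C(K, Quat), (∀ x, ∃ a : ℝ, f x = (a : ℝ) • 1) → ∃ a : ℝ, δ f = (a : ℝ) • 1
  grade_imaginary : ∀ f : C(K, Quat), (∀ x, (f x).re = 0) → (δ f).re = 0
  map_list_prod : ∀ L : List C(K, Quat), (∀ f ∈ L, IsPlaneSpinor K f) →
    δ L.prod = (L.map δ).prod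

/-- The monogenic spinor fields 𝓜⁺(K): the closure in `C(K, Quat)` of restrictions of
functions monogenic on an open neighborhood of `K`. -/
def MonSpinorFields (K : Set R3) : Set C(K, Quat) :=
  closure { f : C(K, Quat) | ∃ U : Set R3, ∃ F : R3 → Quat,
    IsOpen U ∧ K ⊆ U ∧ MonogenicOn F U ∧ ∀ x : K, f x = F x }

/-- A compact region in ℝ³. -/
def IsCompactRegion (K : Set R3) : Prop :=
  K.Nonempty ∧ IsCompact K ∧ K = closure (interior K) ∧ IsConnected Kᶜ






@[simp] lemma qi_re : qi.re = 0 := rfl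
@[simp] lemma qi_imI : qi.imI = 1 := rfl
@[simp] lemma qi_imJ : qi.imJ = 0 := rfl
@[simp] lemma qi_imK : qi.imK = 0 := rfl
@[simp] lemma qj_re : qj.re = 0 := rfl
@[simp] lemma qj_imI : qj.imI = 0 := rfl
@[simp] lemma qj_imJ : qj.imJ = 1 := rfl
@[simp] lemma qj_imK : qj.imK = 0 := rfl
@[simp] lemma qk_re : qk.re = 0 := rfl
@[simp] lemma qk_imI : qk.imI = 0 := rfl
@[simp] lemma qk_imJ : qk.imJ = 0 := rfl
@[simp] lemma qk_imK : qk.imK = 1 := rfl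
attribute [local simp] Quaternion.re_one Quaternion.imI_one Quaternion.imJ_one Quaternion.imK_one

/-- the continuous linear map x ↦ x 0 • 1 + x m • u -/
def ZL (m : Fin 3) (u : Quat) : R3 →L[ℝ] Quat :=
  (EuclideanSpace.proj (0 : Fin 3)).smulRight 1 + (EuclideanSpace.proj m).smulRight u

def Z1 : C(R3, Quat) :=
  ⟨fun x => (x 0) • 1 + (x 1) • qk, (ZL 1 qk).continuous⟩

def Z2 : C(R3, Quat) :=
  ⟨fun x => (x 0) • 1 + (x 2) • qj, (ZL 2 qj).continuous⟩

lemma Z1_eq : ⇑Z1 = ⇑(ZL 1 qk) := rfl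
lemma Z2_eq : ⇑Z2 = ⇑(ZL 2 qj) := rfl

lemma qk_mul_qk : qk * qk = -1 := by
  ext <;> simp [Quaternion.re_mul, Quaternion.imI_mul, Quaternion.imJ_mul, Quaternion.imK_mul]

lemma qj_mul_qj : qj * qj = -1 := by
  ext <;> simp [Quaternion.re_mul, Quaternion.imI_mul, Quaternion.imJ_mul, Quaternion.imK_mul]

lemma ZL_apply_e (m : Fin 3) (u : Quat) (n : Fin 3) :
    ZL m u (e n) = (if (0:Fin 3) = n then (1:Quat) else 0) + (if m = n then u else 0) := by
  simp [ZL, e, EuclideanSpace.single_apply, ite_smul]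

lemma monogenic_Z1 : MonogenicOn (⇑Z1) Set.univ := by
  intro x _
  refine ⟨Z1_eq ▸ (ZL 1 qk).differentiableAt, ?_⟩
  rw [Z1_eq, (ZL 1 qk).fderiv]
  simp [ZL_apply_e, qk_mul_qk]

lemma monogenic_Z2 : MonogenicOn (⇑Z2) Set.univ := by
  intro x _
  refine ⟨Z2_eq ▸ (ZL 2 qj).differentiableAt, ?_⟩
  rw [Z2_eq, (ZL 2 qj).fderiv]
  simp [ZL_apply_e, qj_mul_qj]
variable {K : Set R3}

lemma monogenicOnInterior_of_global (F : C(R3, Quat)) (hF : MonogenicOn (⇑F) Set.univ) :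
    MonogenicOnInterior K (F.restrict K) := by
  intro x hx
  have hev : extendK K (F.restrict K) =ᶠ[nhds x] ⇑F := by
    filter_upwards [isOpen_interior.mem_nhds hx] with y hy
    have hyK : y ∈ K := interior_subset hy
    simp [extendK, hyK]
  obtain ⟨hd, heq⟩ := hF x (Set.mem_univ x)
  refine ⟨(hev.differentiableAt_iff).2 hd, ?_⟩
  rw [hev.fderiv_eq]
  exact heq

lemma exists_plane (c : Quat) : ∃ q : Quat, q ^ 2 = -1 ∧ ∃ a b : ℝ, c = a • 1 + b • q := by
  set r : ℝ := Real.sqrt (c.imI ^ 2 + c.imJ ^ 2 + c.imK ^ 2) with hr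
  have hsumnn : (0:ℝ) ≤ c.imI ^ 2 + c.imJ ^ 2 + c.imK ^ 2 := by positivity
  by_cases h : r = 0
  · have hsum : c.imI ^ 2 + c.imJ ^ 2 + c.imK ^ 2 = 0 := by
      have := Real.sqrt_eq_zero hsumnn |>.mp h
      linarith [this]
    have h1 : c.imI = 0 := by nlinarith [sq_nonneg c.imI, sq_nonneg c.imJ, sq_nonneg c.imK]
    have h2 : c.imJ = 0 := by nlinarith [sq_nonneg c.imI, sq_nonneg c.imJ, sq_nonneg c.imK]
    have h3 : c.imK = 0 := by nlinarith [sq_nonneg c.imI, sq_nonneg c.imJ, sq_nonneg c.imK]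
    refine ⟨qi, by ext <;> simp [pow_two, Quaternion.re_mul, Quaternion.imI_mul,
      Quaternion.imJ_mul, Quaternion.imK_mul], c.re, 0, ?_⟩
    ext <;> simp [h1, h2, h3]
  · have hrpos : 0 < r := lt_of_le_of_ne (Real.sqrt_nonneg _) (Ne.symm h)
    have hr2 : r ^ 2 = c.imI ^ 2 + c.imJ ^ 2 + c.imK ^ 2 := Real.sq_sqrt hsumnn
    obtain ⟨q, hq0, hq1, hq2, hq3⟩ : ∃ q : Quat, q.re = 0 ∧ q.imI = c.imI / r ∧
        q.imJ = c.imJ / r ∧ q.imK = c.imK / r := ⟨⟨0, c.imI / r, c.imJ / r, c.imK / r⟩, rfl, rfl, rfl, rfl⟩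
    refine ⟨q, ?_, c.re, r, ?_⟩
    · ext <;> simp [pow_two, Quaternion.re_mul, Quaternion.imI_mul,
        Quaternion.imJ_mul, Quaternion.imK_mul, hq0, hq1, hq2, hq3] <;> field_simp <;> nlinarith [hr2]
    · ext <;> simp [hq0, hq1, hq2, hq3] <;> field_simp

lemma isPlaneSpinor_const (c : Quat) : IsPlaneSpinor K (ContinuousMap.const _ c) := by
  obtain ⟨q, hq, a, b, hab⟩ := exists_plane c
  refine ⟨q, hq, fun x => ⟨a, b, hab⟩, ?_⟩
  have : (ContinuousMap.const (↥K) c) = (ContinuousMap.const R3 c).restrict K := rfl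
  rw [this]
  apply monogenicOnInterior_of_global
  intro x _
  refine ⟨differentiableAt_const _, ?_⟩
  have h0 : fderiv ℝ (⇑(ContinuousMap.const R3 c)) x = 0 := fderiv_const_apply c
  rw [h0]
  simp

lemma isPlaneSpinor_Z1 : IsPlaneSpinor K (Z1.restrict K) := by
  refine ⟨qk, by rw [pow_two]; exact qk_mul_qk, fun x => ⟨x.1 0, x.1 1, rfl⟩,
    monogenicOnInterior_of_global Z1 monogenic_Z1⟩

lemma isPlaneSpinor_Z2 : IsPlaneSpinor K (Z2.restrict K) := by
  refine ⟨qj, by rw [pow_two]; exact qj_mul_qj, fun x => ⟨x.1 0, x.1 2, rfl⟩,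
    monogenicOnInterior_of_global Z2 monogenic_Z2⟩
variable {δ : C(K, Quat) → Quat}

lemma dzero (hδ : IsSpinCharacter K δ) : δ 0 = 0 := by
  have h := hδ.map_add 0 0
  rw [add_zero] at h
  exact (left_eq_add.mp h)

lemma dconst (hδ : IsSpinCharacter K δ) (c : Quat) : δ (ContinuousMap.const _ c) = c := by
  have h := hδ.map_smul_right 1 c
  rw [one_mul, hδ.map_one, one_mul] at h
  exact h

lemma dsmul (hδ : IsSpinCharacter K δ) (t : ℝ) (f : C(K, Quat)) : δ (t • f) = t • δ f := by
  have h1 : t • f = f * ContinuousMap.const _ (t • (1:Quat)) := by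
    apply ContinuousMap.ext; intro x
    show t • f x = f x * (t • 1)
    rw [mul_smul_comm, mul_one]
  rw [h1, hδ.map_smul_right, mul_smul_comm, mul_one]

def XQ (m : Fin 3) : C(R3, Quat) :=
  ⟨fun x => (x m) • 1, ((EuclideanSpace.proj m).continuous.smul continuous_const)⟩
lemma XQ_apply (m : Fin 3) (x : R3) : XQ m x = (x m) • 1 := rfl
lemma Z1_apply (x : R3) : Z1 x = (x 0) • 1 + (x 1) • qk := rfl
lemma Z2_apply (x : R3) : Z2 x = (x 0) • 1 + (x 2) • qj := rfl
theorem spin_char_is_eval (hKne : K.Nonempty) (hKc : IsCompact K)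
    (hδ : IsSpinCharacter K δ) : ∃ x : K, ∀ f, δ f = f x := by
  haveI : CompactSpace K := isCompact_iff_compactSpace.mp hKc
  classical
  -- coordinate functions and the candidate point
  set cm : Fin 3 → C(K, Quat) := fun m => (XQ m).restrict K with hcm
  have hex : ∀ m, ∃ t : ℝ, δ (cm m) = (t:ℝ) • 1 :=
    fun m => hδ.grade_real (cm m) (fun x => ⟨x.1 m, rfl⟩)
  set aa : Fin 3 → ℝ := fun m => (hex m).choose with haadef
  have haaspec : ∀ m, δ (cm m) = (aa m) • 1 := fun m => (hex m).choose_spec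
  set a : R3 := (WithLp.equiv 2 (Fin 3 → ℝ)).symm aa with hadef
  have ham : ∀ m, a m = aa m := fun m => rfl
  -- generators
  set G : Set C(R3, Quat) :=
    {F | (∃ c, F = ContinuousMap.const R3 c) ∨ F = Z1 ∨ F = Z2} with hGdef
  have hGplane : ∀ F ∈ G, IsPlaneSpinor K (F.restrict K) := by
    rintro F (⟨c, rfl⟩ | rfl | rfl)
    · exact isPlaneSpinor_const c
    · exact isPlaneSpinor_Z1
    · exact isPlaneSpinor_Z2
  have hZ1res : Z1.restrict K = cm 0 + cm 1 * ContinuousMap.const _ qk := by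
    apply ContinuousMap.ext; intro x
    show (x.1 0) • 1 + (x.1 1) • qk = (x.1 0) • (1:Quat) + ((x.1 1) • 1) * qk
    rw [smul_mul_assoc, one_mul]
  have hZ2res : Z2.restrict K = cm 0 + cm 2 * ContinuousMap.const _ qj := by
    apply ContinuousMap.ext; intro x
    show (x.1 0) • 1 + (x.1 2) • qj = (x.1 0) • (1:Quat) + ((x.1 2) • 1) * qj
    rw [smul_mul_assoc, one_mul]
  have hGval : ∀ F ∈ G, δ (F.restrict K) = F a := by
    rintro F (⟨c, rfl⟩ | rfl | rfl)
    · exact dconst hδ c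
    · rw [hZ1res, hδ.map_add, hδ.map_smul_right, haaspec 0, haaspec 1]
      show (aa 0) • (1:Quat) + ((aa 1) • 1) * qk = (a 0) • 1 + (a 1) • qk
      rw [smul_mul_assoc, one_mul, ham 0, ham 1]
    · rw [hZ2res, hδ.map_add, hδ.map_smul_right, haaspec 0, haaspec 2]
      show (aa 0) • (1:Quat) + ((aa 2) • 1) * qj = (a 0) • 1 + (a 2) • qj
      rw [smul_mul_assoc, one_mul, ham 0, ham 2]
  -- products of generators
  have hresprod : ∀ L : List C(R3, Quat),
      (L.prod).restrict K = (L.map (fun F => F.restrict K)).prod := by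
    intro L
    induction L with
    | nil => rfl
    | cons g t ih => rw [List.prod_cons, List.map_cons, List.prod_cons, ← ih]; rfl
  have hevalprod : ∀ L : List C(R3, Quat), (∀ g ∈ L, g ∈ G) →
      (L.map (fun F => δ (F.restrict K))).prod = L.prod a := by
    intro L
    induction L with
    | nil => intro _; rfl
    | cons g t ih =>
      intro hL
      rw [List.map_cons, List.prod_cons, List.prod_cons]
      rw [hGval g (hL g (List.mem_cons_self)), ih (fun f hf => hL f (List.mem_cons_of_mem g hf))]
      rfl
  have hlist : ∀ L : List C(R3, Quat), (∀ g ∈ L, g ∈ G) →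
      δ ((L.prod).restrict K) = L.prod a := by
    intro L hL
    rw [hresprod, hδ.map_list_prod _ (by
      intro f hf
      obtain ⟨g, hg, rfl⟩ := List.mem_map.mp hf
      exact hGplane g (hL g hg)), List.map_map]
    exact hevalprod L hL
  -- the span of products of generators
  set S : Set C(R3, Quat) := {F | ∃ L : List C(R3, Quat), (∀ g ∈ L, g ∈ G) ∧ F = L.prod}
    with hSdef
  set P : Submodule ℝ C(R3, Quat) := Submodule.span ℝ S with hPdef
  have hspanval : ∀ F ∈ P, δ (F.restrict K) = F a := by
    intro F hF
    induction hF using Submodule.span_induction with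
    | mem F hF => obtain ⟨L, hL, rfl⟩ := hF; exact hlist L hL
    | zero =>
      have h0 : ((0 : C(R3, Quat)).restrict K) = 0 := rfl
      rw [h0, dzero hδ]; rfl
    | add f g _ _ hf hg =>
      have h1 : ((f + g).restrict K) = f.restrict K + g.restrict K := rfl
      rw [h1, hδ.map_add, hf, hg]; rfl
    | smul t f _ hf =>
      have h1 : ((t • f).restrict K) = t • (f.restrict K) := rfl
      rw [h1, dsmul hδ, hf]; rfl
  have hmulS : ∀ F₁ ∈ P, ∀ F₂ ∈ P, F₁ * F₂ ∈ P := by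
    intro F₁ h₁
    induction h₁ using Submodule.span_induction with
    | mem F hF =>
      intro F₂ h₂
      induction h₂ using Submodule.span_induction with
      | mem F' hF' =>
        obtain ⟨L, hL, rfl⟩ := hF
        obtain ⟨L', hL', rfl⟩ := hF'
        refine Submodule.subset_span ⟨L ++ L', ?_, (List.prod_append).symm⟩
        intro g hg
        rcases List.mem_append.mp hg with h | h
        · exact hL g h
        · exact hL' g h
      | zero => rw [mul_zero]; exact zero_mem _
      | add g₁ g₂ _ _ hg₁ hg₂ => rw [mul_add]; exact add_mem hg₁ hg₂
      | smul t g _ hg => rw [mul_smul_comm]; exact Submodule.smul_mem _ t hg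
    | zero => intro F₂ _; rw [zero_mul]; exact zero_mem _
    | add f₁ f₂ _ _ h₁ h₂ => intro F₂ hF₂; rw [add_mul]; exact add_mem (h₁ F₂ hF₂) (h₂ F₂ hF₂)
    | smul t f _ hf => intro F₂ hF₂; rw [smul_mul_assoc]; exact Submodule.smul_mem _ t (hf F₂ hF₂)
  have hconstP : ∀ c : Quat, ContinuousMap.const R3 c ∈ P := by
    intro c
    exact Submodule.subset_span ⟨[ContinuousMap.const R3 c], by
      intro g hg; rw [List.mem_singleton] at hg; exact hg ▸ Or.inl ⟨c, rfl⟩,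
      (List.prod_singleton).symm⟩
  have hZ1P : Z1 ∈ P := Submodule.subset_span ⟨[Z1], by
      intro g hg; rw [List.mem_singleton] at hg; exact hg ▸ Or.inr (Or.inl rfl),
      (List.prod_singleton).symm⟩
  have hZ2P : Z2 ∈ P := Submodule.subset_span ⟨[Z2], by
      intro g hg; rw [List.mem_singleton] at hg; exact hg ▸ Or.inr (Or.inr rfl),
      (List.prod_singleton).symm⟩
  have hXP : ∀ m : Fin 3, XQ m ∈ P := by
    have hid0 : XQ 0 = (2⁻¹:ℝ) • (Z1 +
        ContinuousMap.const R3 qi * Z1 * ContinuousMap.const R3 (-qi)) := by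
      apply ContinuousMap.ext; intro x
      simp only [ContinuousMap.smul_apply, ContinuousMap.add_apply, ContinuousMap.mul_apply,
        ContinuousMap.const_apply, XQ_apply, Z1_apply]
      ext <;> simp [Quaternion.re_mul, Quaternion.imI_mul, Quaternion.imJ_mul,
        Quaternion.imK_mul] <;> ring
    have hid1 : XQ 1 = (2⁻¹:ℝ) • (Z1 * ContinuousMap.const R3 (-qk)) + (-(2⁻¹:ℝ)) •
        (ContinuousMap.const R3 qi * Z1 * ContinuousMap.const R3 (-qj)) := by
      apply ContinuousMap.ext; intro x
      simp only [ContinuousMap.smul_apply, ContinuousMap.add_apply, ContinuousMap.mul_apply,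
        ContinuousMap.const_apply, XQ_apply, Z1_apply]
      ext <;> simp [Quaternion.re_mul, Quaternion.imI_mul, Quaternion.imJ_mul,
        Quaternion.imK_mul] <;> ring
    have hid2 : XQ 2 = (2⁻¹:ℝ) • (Z2 * ContinuousMap.const R3 (-qj)) + (-(2⁻¹:ℝ)) •
        (ContinuousMap.const R3 qi * Z2 * ContinuousMap.const R3 qk) := by
      apply ContinuousMap.ext; intro x
      simp only [ContinuousMap.smul_apply, ContinuousMap.add_apply, ContinuousMap.mul_apply,
        ContinuousMap.const_apply, XQ_apply, Z2_apply]
      ext <;> simp [Quaternion.re_mul, Quaternion.imI_mul, Quaternion.imJ_mul,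
        Quaternion.imK_mul] <;> ring
    intro m; fin_cases m
    · show XQ 0 ∈ P
      rw [hid0]
      exact Submodule.smul_mem _ _ (add_mem hZ1P
        (hmulS _ (hmulS _ (hconstP qi) _ hZ1P) _ (hconstP (-qi))))
    · show XQ 1 ∈ P
      rw [hid1]
      exact add_mem (Submodule.smul_mem _ _ (hmulS _ hZ1P _ (hconstP (-qk))))
        (Submodule.smul_mem _ _ (hmulS _ (hmulS _ (hconstP qi) _ hZ1P) _ (hconstP (-qj))))
    · show XQ 2 ∈ P
      rw [hid2]
      exact add_mem (Submodule.smul_mem _ _ (hmulS _ hZ2P _ (hconstP (-qj))))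
        (Submodule.smul_mem _ _ (hmulS _ (hmulS _ (hconstP qi) _ hZ2P) _ (hconstP qk)))
  -- the point a lies in K
  set Bq : Fin 3 → C(R3, Quat) := fun m => XQ m - ContinuousMap.const R3 ((aa m) • 1) with hBdef
  have hBP : ∀ m, Bq m ∈ P := fun m => sub_mem (hXP m) (hconstP _)
  set Hq : C(R3, Quat) := Bq 0 * Bq 0 + Bq 1 * Bq 1 + Bq 2 * Bq 2 with hHdef
  have hHP : Hq ∈ P := add_mem (add_mem (hmulS _ (hBP 0) _ (hBP 0))
    (hmulS _ (hBP 1) _ (hBP 1))) (hmulS _ (hBP 2) _ (hBP 2))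
  set sq : R3 → ℝ := fun x =>
    (x 0 - aa 0) * (x 0 - aa 0) + (x 1 - aa 1) * (x 1 - aa 1) + (x 2 - aa 2) * (x 2 - aa 2)
    with hsqdef
  have hsqcont : Continuous sq := by
    have hc : ∀ m : Fin 3, Continuous fun x : R3 => x m - aa m :=
      fun m => ((EuclideanSpace.proj m).continuous).sub continuous_const
    exact (((hc 0).mul (hc 0)).add ((hc 1).mul (hc 1))).add ((hc 2).mul (hc 2))
  have hsqnn : ∀ x, 0 ≤ sq x := by
    intro x; simp only [hsqdef]; nlinarith [mul_self_nonneg (x 0 - aa 0),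
      mul_self_nonneg (x 1 - aa 1), mul_self_nonneg (x 2 - aa 2)]
  have hBval : ∀ (m) (x : R3), Bq m x = ((x m - aa m) : ℝ) • 1 := by
    intro m x
    show (x m) • (1:Quat) - (aa m) • 1 = _
    rw [sub_smul]
  have hHval : ∀ x : R3, Hq x = (sq x) • 1 := by
    intro x
    show Bq 0 x * Bq 0 x + Bq 1 x * Bq 1 x + Bq 2 x * Bq 2 x = _
    rw [hBval, hBval, hBval, smul_mul_assoc, one_mul, smul_smul,
      smul_mul_assoc, one_mul, smul_smul, smul_mul_assoc, one_mul, smul_smul,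
      ← add_smul, ← add_smul]
  have hsqa : sq a = 0 := by
    simp only [hsqdef, ham]; ring
  have haK : a ∈ K := by
    by_contra haK
    obtain ⟨x₀, hx₀K, hmin'⟩ := hKc.exists_isMinOn hKne hsqcont.continuousOn
    obtain ⟨x₁, hx₁K, hmax'⟩ := hKc.exists_isMaxOn hKne hsqcont.continuousOn
    have hmin : ∀ y ∈ K, sq x₀ ≤ sq y := fun y hy => hmin' hy
    have hmax : ∀ y ∈ K, sq y ≤ sq x₁ := fun y hy => hmax' hy
    have hεpos : 0 < sq x₀ := by
      rcases lt_or_eq_of_le (hsqnn x₀) with h | h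
      · exact h
      · exfalso
        have h0 : x₀ = a := by
          have h1 : (x₀ 0 - aa 0) = 0 ∧ (x₀ 1 - aa 1) = 0 ∧ (x₀ 2 - aa 2) = 0 := by
            have := h.symm
            simp only [hsqdef] at this
            refine ⟨?_, ?_, ?_⟩ <;>
              nlinarith [mul_self_nonneg (x₀ 0 - aa 0), mul_self_nonneg (x₀ 1 - aa 1),
                mul_self_nonneg (x₀ 2 - aa 2)]
          ext m
          fin_cases m
          · show x₀ 0 = a 0
            rw [ham]; linarith [h1.1]
          · show x₀ 1 = a 1
            rw [ham]; linarith [h1.2.1]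
          · show x₀ 2 = a 2
            rw [ham]; linarith [h1.2.2]
        exact haK (h0 ▸ hx₀K)
    set R : ℝ := sq x₁ + 1 with hRdef
    have hRpos : 0 < R := by have := hsqnn x₁; linarith
    set ρ : ℝ := 1 - sq x₀ / R with hρdef
    have hρ0 : 0 ≤ ρ := by
      have h1 : sq x₀ ≤ sq x₁ := hmin x₁ hx₁K
      have h2 : sq x₀ / R ≤ 1 := by
        rw [div_le_one hRpos]; linarith
      simp only [hρdef]; linarith
    have hρ1 : ρ < 1 := by
      have : 0 < sq x₀ / R := div_pos hεpos hRpos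
      simp only [hρdef]; linarith
    set E : C(R3, Quat) := (1 : C(R3, Quat)) - (R⁻¹ : ℝ) • Hq with hEdef
    have hEP : E ∈ P := by
      refine sub_mem ?_ (Submodule.smul_mem _ _ hHP)
      exact hconstP 1
    have hEpowP : ∀ m : ℕ, E ^ m ∈ P := by
      intro m
      induction m with
      | zero => rw [pow_zero]; exact hconstP 1
      | succ n ih => rw [pow_succ]; exact hmulS _ ih _ hEP
    have hEval : ∀ x : R3, E x = ((1 - R⁻¹ * sq x) : ℝ) • 1 := by
      intro x
      show (1 : Quat) - (R⁻¹ : ℝ) • Hq x = _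
      rw [hHval, smul_smul, sub_smul, one_smul]
    have hEpowval : ∀ (m : ℕ) (x : R3), (E ^ m) x = (((1 - R⁻¹ * sq x) : ℝ) ^ m) • 1 := by
      intro m x
      have h1 : (E ^ m) x = (E x) ^ m := by
        rw [ContinuousMap.pow_apply]
      rw [h1, hEval, smul_pow, one_pow]
    have hδE : ∀ m : ℕ, δ ((E ^ m).restrict K) = 1 := by
      intro m
      rw [hspanval _ (hEpowP m)]
      show (E ^ m) a = 1
      rw [hEpowval, hsqa]
      simp
    have hnorm : ∀ m : ℕ, ‖(E ^ m).restrict K‖ ≤ ρ ^ m := by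
      intro m
      rw [ContinuousMap.norm_le _ (pow_nonneg hρ0 m)]
      intro x
      have h1 : ((E ^ m).restrict K) x = (((1 - R⁻¹ * sq x.1) : ℝ) ^ m) • 1 := hEpowval m x.1
      rw [h1, norm_smul, norm_one, mul_one, Real.norm_eq_abs, abs_pow]
      apply pow_le_pow_left₀ (abs_nonneg _)
      have hle : sq x.1 ≤ sq x₁ := hmax x.1 x.2
      have hge : sq x₀ ≤ sq x.1 := hmin x.1 x.2
      have h2 : R⁻¹ * sq x.1 ≤ 1 := by
        rw [← div_eq_inv_mul, div_le_one hRpos]; linarith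
      have h3 : 0 ≤ 1 - R⁻¹ * sq x.1 := by linarith
      rw [abs_of_nonneg h3]
      have h4 : sq x₀ / R ≤ R⁻¹ * sq x.1 := by
        rw [div_eq_inv_mul]
        exact mul_le_mul_of_nonneg_left hge (inv_nonneg.mpr hRpos.le)
      simp only [hρdef]; linarith
    have htend : Filter.Tendsto (fun m : ℕ => (E ^ m).restrict K) Filter.atTop (nhds 0) :=
      squeeze_zero_norm hnorm (tendsto_pow_atTop_nhds_zero_of_lt_one hρ0 hρ1)
    have hcomp := (hδ.continuous.tendsto 0).comp htend
    have heq1 : (fun m : ℕ => δ ((E ^ m).restrict K)) = fun _ => (1 : Quat) := by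
      funext m; exact hδE m
    rw [Function.comp_def] at hcomp
    rw [heq1] at hcomp
    have h10 : (1 : Quat) = δ 0 := tendsto_nhds_unique tendsto_const_nhds hcomp
    rw [dzero hδ] at h10
    exact one_ne_zero h10
  -- conclusion via Stone–Weierstrass
  set abar : K := ⟨a, haK⟩ with habar
  refine ⟨abar, ?_⟩
  have hDclosed : IsClosed {f : C(K, Quat) | δ f = f abar} := by
    have hc : Continuous fun f : C(K, Quat) => δ f - f abar :=
      hδ.continuous.sub (continuous_eval_const abar)
    have hset : {f : C(K, Quat) | δ f = f abar} =
        (fun f : C(K, Quat) => δ f - f abar) ⁻¹' {0} := by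
      ext f; simp [sub_eq_zero]
    rw [hset]; exact IsClosed.preimage hc isClosed_singleton
  set γ : Fin 3 → C(K, ℝ) := fun m =>
    ⟨fun x => x.1 m, ((EuclideanSpace.proj m).continuous.comp continuous_subtype_val)⟩ with hγdef
  set A : Subalgebra ℝ C(K, ℝ) := Algebra.adjoin ℝ (Set.range γ) with hAdef
  have hAsep : A.SeparatesPoints := by
    intro x y hxy
    have hex2 : ∃ m : Fin 3, x.1 m ≠ y.1 m := by
      by_contra hc
      push_neg at hc
      exact hxy (Subtype.ext (by ext m; exact hc m))
    obtain ⟨m, hm⟩ := hex2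
    exact ⟨⇑(γ m), ⟨γ m, Algebra.subset_adjoin ⟨m, rfl⟩, rfl⟩, hm⟩
  have htrans : ∀ p ∈ A, ∀ u : Quat, ∃ F ∈ P, ∀ x : K, (F.restrict K) x = p x • u := by
    intro p hp
    induction hp using Algebra.adjoin_induction with
    | mem g hg =>
      obtain ⟨m, rfl⟩ := hg
      intro u
      refine ⟨XQ m * ContinuousMap.const R3 u, hmulS _ (hXP m) _ (hconstP u), ?_⟩
      intro x
      show (x.1 m) • (1:Quat) * u = (γ m x) • u
      rw [smul_mul_assoc, one_mul]
      rfl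
    | algebraMap r =>
      intro u
      refine ⟨ContinuousMap.const R3 (r • u), hconstP _, ?_⟩
      intro x
      show r • u = ((algebraMap ℝ C(K,ℝ) r) x) • u
      simp
    | add p₁ p₂ _ _ h₁ h₂ =>
      intro u
      obtain ⟨F₁, hF₁, hv₁⟩ := h₁ u
      obtain ⟨F₂, hF₂, hv₂⟩ := h₂ u
      refine ⟨F₁ + F₂, add_mem hF₁ hF₂, ?_⟩
      intro x
      show (F₁.restrict K) x + (F₂.restrict K) x = ((p₁ + p₂) x) • u
      rw [hv₁, hv₂, ContinuousMap.add_apply, add_smul]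
    | mul p₁ p₂ _ _ h₁ h₂ =>
      intro u
      obtain ⟨F₁, hF₁, hv₁⟩ := h₁ 1
      obtain ⟨F₂, hF₂, hv₂⟩ := h₂ u
      refine ⟨F₁ * F₂, hmulS _ hF₁ _ hF₂, ?_⟩
      intro x
      show (F₁.restrict K) x * (F₂.restrict K) x = ((p₁ * p₂) x) • u
      rw [hv₁, hv₂, ContinuousMap.mul_apply, smul_mul_assoc, one_mul, smul_smul]
  have hqinorm : ‖qi‖ = 1 := by
    have h : ‖qi‖ * ‖qi‖ = 1 := by
      rw [← Quaternion.normSq_eq_norm_mul_self]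
      simp [Quaternion.normSq_def']
    rcases mul_self_eq_one_iff.mp h with h1 | h1
    · exact h1
    · exfalso; have := norm_nonneg qi; rw [h1] at this; linarith
  have hqjnorm : ‖qj‖ = 1 := by
    have h : ‖qj‖ * ‖qj‖ = 1 := by
      rw [← Quaternion.normSq_eq_norm_mul_self]
      simp [Quaternion.normSq_def']
    rcases mul_self_eq_one_iff.mp h with h1 | h1
    · exact h1
    · exfalso; have := norm_nonneg qj; rw [h1] at this; linarith
  have hqknorm : ‖qk‖ = 1 := by
    have h : ‖qk‖ * ‖qk‖ = 1 := by
      rw [← Quaternion.normSq_eq_norm_mul_self]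
      simp [Quaternion.normSq_def']
    rcases mul_self_eq_one_iff.mp h with h1 | h1
    · exact h1
    · exfalso; have := norm_nonneg qk; rw [h1] at this; linarith
  intro f
  have hmem : f ∈ closure {g : C(K, Quat) | ∃ F ∈ P, g = F.restrict K} := by
    rw [Metric.mem_closure_iff]
    intro ε hε
    set g0 : C(K, ℝ) := ⟨fun x => (f x).re, Quaternion.continuous_re.comp f.continuous⟩
    set g1 : C(K, ℝ) := ⟨fun x => (f x).imI, Quaternion.continuous_imI.comp f.continuous⟩
    set g2 : C(K, ℝ) := ⟨fun x => (f x).imJ, Quaternion.continuous_imJ.comp f.continuous⟩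
    set g3 : C(K, ℝ) := ⟨fun x => (f x).imK, Quaternion.continuous_imK.comp f.continuous⟩
    have happrox : ∀ g : C(K, ℝ), ∃ p ∈ A, ‖p - g‖ < ε / 8 := by
      intro g
      obtain ⟨p, hp⟩ := ContinuousMap.exists_mem_subalgebra_near_continuousMap_of_separatesPoints
        A hAsep g (ε / 8) (by linarith)
      exact ⟨(p : C(K, ℝ)), p.2, hp⟩
    obtain ⟨p0, hp0A, hp0⟩ := happrox g0
    obtain ⟨p1, hp1A, hp1⟩ := happrox g1
    obtain ⟨p2, hp2A, hp2⟩ := happrox g2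
    obtain ⟨p3, hp3A, hp3⟩ := happrox g3
    obtain ⟨F0, hF0P, hv0⟩ := htrans p0 hp0A 1
    obtain ⟨F1, hF1P, hv1⟩ := htrans p1 hp1A qi
    obtain ⟨F2, hF2P, hv2⟩ := htrans p2 hp2A qj
    obtain ⟨F3, hF3P, hv3⟩ := htrans p3 hp3A qk
    refine ⟨(F0 + F1 + F2 + F3).restrict K,
      ⟨F0 + F1 + F2 + F3, add_mem (add_mem (add_mem hF0P hF1P) hF2P) hF3P, rfl⟩, ?_⟩
    have hb : ∀ x : K, ((F0 + F1 + F2 + F3).restrict K) x =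
        p0 x • (1:Quat) + p1 x • qi + p2 x • qj + p3 x • qk := by
      intro x
      show (F0.restrict K) x + (F1.restrict K) x + (F2.restrict K) x + (F3.restrict K) x = _
      rw [hv0 x, hv1 x, hv2 x, hv3 x]
    have hf : ∀ x : K, f x = g0 x • (1:Quat) + g1 x • qi + g2 x • qj + g3 x • qk := by
      intro x
      ext <;> (simp <;> rfl)
    have hdist : dist f ((F0 + F1 + F2 + F3).restrict K) ≤ ε / 2 := by
      rw [ContinuousMap.dist_le (by linarith)]
      intro x
      rw [dist_eq_norm, hb x, hf x]
      have hrw : g0 x • (1:Quat) + g1 x • qi + g2 x • qj + g3 x • qk -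
          (p0 x • (1:Quat) + p1 x • qi + p2 x • qj + p3 x • qk) =
          (g0 x - p0 x) • (1:Quat) + (g1 x - p1 x) • qi +
          (g2 x - p2 x) • qj + (g3 x - p3 x) • qk := by
        simp only [sub_smul]; abel
      rw [hrw]
      have hbound : ∀ (t : ℝ) (u : Quat) (p : C(K,ℝ)) (g : C(K,ℝ)), ‖u‖ = 1 →
          ‖p - g‖ < ε/8 → t = g x - p x → ‖t • u‖ ≤ ε/8 := by
        intro t u p g hu hpg ht
        rw [norm_smul, hu, mul_one, ht, Real.norm_eq_abs]
        have h1 : |g x - p x| = ‖(p - g) x‖ := by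
          rw [ContinuousMap.sub_apply, Real.norm_eq_abs, abs_sub_comm]
        rw [h1]
        exact le_of_lt (lt_of_le_of_lt (ContinuousMap.norm_coe_le_norm _ _) hpg)
      have h0 := hbound _ 1 p0 g0 norm_one hp0 rfl
      have h1 := hbound _ qi p1 g1 hqinorm hp1 rfl
      have h2 := hbound _ qj p2 g2 hqjnorm hp2 rfl
      have h3 := hbound _ qk p3 g3 hqknorm hp3 rfl
      calc ‖(g0 x - p0 x) • (1:Quat) + (g1 x - p1 x) • qi +
          (g2 x - p2 x) • qj + (g3 x - p3 x) • qk‖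
          ≤ ‖(g0 x - p0 x) • (1:Quat) + (g1 x - p1 x) • qi + (g2 x - p2 x) • qj‖ +
            ‖(g3 x - p3 x) • qk‖ := norm_add_le _ _
        _ ≤ (‖(g0 x - p0 x) • (1:Quat) + (g1 x - p1 x) • qi‖ + ‖(g2 x - p2 x) • qj‖) +
            ‖(g3 x - p3 x) • qk‖ := by gcongr; exact norm_add_le _ _
        _ ≤ ((‖(g0 x - p0 x) • (1:Quat)‖ + ‖(g1 x - p1 x) • qi‖) + ‖(g2 x - p2 x) • qj‖) +
            ‖(g3 x - p3 x) • qk‖ := by gcongr; exact norm_add_le _ _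
        _ ≤ ((ε/8 + ε/8) + ε/8) + ε/8 := by gcongr
        _ = ε / 2 := by ring
    exact lt_of_le_of_lt hdist (by linarith)
  have hsub : {g : C(K, Quat) | ∃ F ∈ P, g = F.restrict K} ⊆ {f : C(K, Quat) | δ f = f abar} := by
    rintro g ⟨F, hF, rfl⟩
    show δ (F.restrict K) = (F.restrict K) abar
    rw [hspanval F hF]
    rfl
  exact (closure_minimal hsub hDclosed) hmem

lemma eval_list_prod {K : Set R3} (L : List C(K, Quat)) (x : K) :
    L.prod x = (L.map (fun f : C(K, Quat) => f x)).prod := by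
  induction L with
  | nil => rfl
  | cons g t ih => rw [List.prod_cons, List.map_cons, List.prod_cons, ← ih]; rfl

/-- Bijectivity part of the main theorem: evaluations are spin characters and the map
sending a point to the restriction of its evaluation character to 𝓜⁺(K) is a bijection
from `K` onto the set of restrictions of spin characters. -/
theorem spinor_spectrum_bijection (K : Set R3) (hK : IsCompactRegion K) :
    (∀ x : K, IsSpinCharacter K (fun f => f x)) ∧
    Function.Injective (fun (x : K) => fun (f : MonSpinorFields K) => (f : C(K, Quat)) x) ∧
    Set.range (fun (x : K) => fun (f : MonSpinorFields K) => (f : C(K, Quat)) x) =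
      { g : MonSpinorFields K → Quat |
        ∃ δ : C(K, Quat) → Quat, IsSpinCharacter K δ ∧ g = fun f : MonSpinorFields K => δ (f : C(K, Quat)) } := by
  have part1 : ∀ x : K, IsSpinCharacter K (fun f => f x) := by
    intro x
    refine ⟨?_, fun f g => rfl, fun f c => rfl, rfl, fun f hf => hf x, fun f hf => hf x,
      fun L _ => eval_list_prod L x⟩
    exact continuous_eval_const x
  refine ⟨part1, ?_, ?_⟩
  · intro x y hxy
    have hZm : ∀ Z : C(R3, Quat), MonogenicOn (⇑Z) Set.univ →
        Z.restrict K ∈ MonSpinorFields K := by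
      intro Z hZ
      apply subset_closure
      exact ⟨Set.univ, ⇑Z, isOpen_univ, Set.subset_univ K, hZ, fun x => rfl⟩
    have h1 := congrFun hxy (⟨Z1.restrict K, hZm Z1 monogenic_Z1⟩ : MonSpinorFields K)
    have h2 := congrFun hxy (⟨Z2.restrict K, hZm Z2 monogenic_Z2⟩ : MonSpinorFields K)
    have h1' : (x.1 0) • (1:Quat) + (x.1 1) • qk = (y.1 0) • (1:Quat) + (y.1 1) • qk := h1
    have h2' : (x.1 0) • (1:Quat) + (x.1 2) • qj = (y.1 0) • (1:Quat) + (y.1 2) • qj := h2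
    have e0 : x.1 0 = y.1 0 := by
      have := congrArg QuaternionAlgebra.re h1'
      simpa using this
    have e1 : x.1 1 = y.1 1 := by
      have := congrArg QuaternionAlgebra.imK h1'
      simpa using this
    have e2 : x.1 2 = y.1 2 := by
      have := congrArg QuaternionAlgebra.imJ h2'
      simpa using this
    apply Subtype.ext
    ext m
    fin_cases m
    · exact e0
    · exact e1
    · exact e2
  · ext g
    constructor
    · rintro ⟨x, rfl⟩
      exact ⟨fun f => f x, part1 x, rfl⟩
    · rintro ⟨δ, hδ, rfl⟩
      obtain ⟨x, hx⟩ := spin_char_is_eval hK.1 hK.2.1 hδ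
      refine ⟨x, ?_⟩
      funext f
      exact (hx (f : C(K, Quat))).symm

end
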